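/- Let Q be a labelled quiver with labels X and let F ⊆ R⟨X⟩_Q be a set of polynomials uniformly compatible with Q. Then for any f ∈ R⟨X⟩ the following are equivalent: (1) f is compatible with Q and lies in the two-sided ideal generated by F; (2) f is compatible with Q and can be rewritten to zero using F; (3) f is a Q-consequence of F. -/

import Mathlib

open scoped BigOperators

/-- The free `R`-algebra `R⟨X⟩` on `X`, as the monoid algebra over `R`
of the free monoid `⟨X⟩` of words over `X`. -/
abbrev FreeAlg (R X : Type*) [CommRing R] := MonoidAlgebra R (FreeMonoid X)

/-- The monomial in `R⟨X⟩` corresponding to a word `m ∈ ⟨X⟩`. -/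
noncomputable def monom (R : Type*) [CommRing R] {X : Type*} (m : FreeMonoid X) : FreeAlg R X :=
  MonoidAlgebra.of R (FreeMonoid X) m

/-- `h` is obtained from `f` by a rewriting step using `g`: some monomial `m_g` in the
support of `g` divides a monomial `a·m_g·b` in the support of `f`, and
`h = f + λ·a·g·b` for some `λ ∈ R`. -/
def RewriteStep {R X : Type*} [CommRing R] (g f h : FreeAlg R X) : Prop :=
  ∃ (a b mg : FreeMonoid X) (lam : R),
    mg ∈ (MonoidAlgebra.coeff g).support ∧
    a * mg * b ∈ (MonoidAlgebra.coeff f).support ∧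
    h = f + lam • (monom R a * g * monom R b)

/-- `f` can be rewritten to `h` using the set `G`: there is a finite chain of rewriting
steps, each using an element of `G`, leading from `f` to `h`. -/
def RewritesTo {R X : Type*} [CommRing R] (G : Set (FreeAlg R X)) (f h : FreeAlg R X) : Prop :=
  Relation.ReflTransGen (fun p q => ∃ g ∈ G, RewriteStep g p q) f h

/-- Membership in the two-sided ideal `(F)` generated by `F`:
`f` is a finite sum `Σᵢ aᵢ·fᵢ·bᵢ` with `aᵢ, bᵢ ∈ R⟨X⟩` and `fᵢ ∈ F`. -/
def MemIdeal {R X : Type*} [CommRing R] (F : Set (FreeAlg R X)) (f : FreeAlg R X) : Prop :=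
  ∃ (n : ℕ) (a b g : Fin n → FreeAlg R X),
    (∀ i, g i ∈ F) ∧ f = ∑ i, a i * g i * b i

/-- A labelled quiver `Q = (V, E, X, s, t, l)`: a directed multigraph with vertex set `V`,
edge set `E`, source and target maps `s, t : E → V` and labelling `l : E → X`. -/
structure LabelledQuiver (V E X : Type*) where
  src : E → V
  tgt : E → V
  lab : E → X

/-- Paths in a labelled quiver `Q`; `LQPath Q u w` is the type of paths with source `u` and
target `w`.  `nil v` is the empty path at `v`; `cons e p` appends the edge `e` after `p`. -/
inductive LQPath {V E X : Type*} (Q : LabelledQuiver V E X) : V → V → Type _ where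
  | nil (v : V) : LQPath Q v v
  | cons {u : V} (e : E) (p : LQPath Q u (Q.src e)) : LQPath Q u (Q.tgt e)

namespace LQPath
variable {V E X : Type*} {Q : LabelledQuiver V E X}
/-- The label `l(p) = l(eₙ)⋯l(e₁) ∈ ⟨X⟩` of a path; the empty path has label `1`. -/
def label : {u w : V} → LQPath Q u w → FreeMonoid X
  | _, _, .nil _ => 1
  | _, _, .cons e p => FreeMonoid.of (Q.lab e) * p.label
end LQPath

namespace LabelledQuiver

variable {V E X : Type*} (Q : LabelledQuiver V E X)

/-- The set of signatures `σ(m) = {(s(p), t(p)) : p a path in Q with l(p) = m}`. -/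
def sigmaM (m : FreeMonoid X) : Set (V × V) :=
  {vw | ∃ p : LQPath Q vw.1 vw.2, p.label = m}

variable {R : Type*} [CommRing R]

/-- The set of signatures `σ(f) = ⋂_{m ∈ supp(f)} σ(m)` of a polynomial. -/
def sigmaP (f : FreeAlg R X) : Set (V × V) :=
  ⋂ m ∈ (MonoidAlgebra.coeff f).support, Q.sigmaM m

/-- `f` is compatible with `Q` if `σ(f) ≠ ∅`. -/
def Compatible (f : FreeAlg R X) : Prop :=
  (Q.sigmaP f).Nonempty

/-- `f` is uniformly compatible with `Q` if it is compatible and all monomials in its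
support have the same set of signatures. -/
def UniformlyCompatible (f : FreeAlg R X) : Prop :=
  Q.Compatible f ∧
    ∀ m ∈ (MonoidAlgebra.coeff f).support, ∀ m' ∈ (MonoidAlgebra.coeff f).support,
      Q.sigmaM m = Q.sigmaM m'

/-- The set of sources `s(f)` of a polynomial: the projection of `σ(f)` to the first
component. -/
def srcSet (f : FreeAlg R X) : Set V := Prod.fst '' Q.sigmaP f

/-- The set of targets `t(f)` of a polynomial: the projection of `σ(f)` to the second
component. -/
def tgtSet (f : FreeAlg R X) : Set V := Prod.snd '' Q.sigmaP f

end LabelledQuiver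

/-- `f` is a `Q`-consequence of `F`: `f` is compatible with `Q` and there are finitely many
uniformly compatible `aᵢ, bᵢ` and `fᵢ ∈ F` with `f = Σᵢ aᵢ·fᵢ·bᵢ` where each summand
satisfies `σ(aᵢ·fᵢ·bᵢ) ⊇ σ(f)`. -/
def LabelledQuiver.QConsequence {V E X R : Type*} [CommRing R] (Q : LabelledQuiver V E X)
    (F : Set (FreeAlg R X)) (f : FreeAlg R X) : Prop :=
  Q.Compatible f ∧
    ∃ (n : ℕ) (a b g : Fin n → FreeAlg R X),
      (∀ i, Q.UniformlyCompatible (a i)) ∧ (∀ i, Q.UniformlyCompatible (b i)) ∧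
      (∀ i, g i ∈ F) ∧ f = ∑ i, a i * g i * b i ∧
      ∀ i, Q.sigmaP f ⊆ Q.sigmaP (a i * g i * b i)

section Aux

variable {R V E X : Type*} [CommRing R]

namespace LQPath

variable {Q : LabelledQuiver V E X}

/-- Composition of paths: `q.comp p` first follows `p`, then `q`. -/
def comp : {u v w : V} → LQPath Q v w → LQPath Q u v → LQPath Q u w
  | _, _, _, .nil _, p => p
  | _, _, _, .cons e q, p => .cons e (q.comp p)

lemma label_comp : ∀ {u v w : V} (q : LQPath Q v w) (p : LQPath Q u v),
    (q.comp p).label = q.label * p.label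
  | _, _, _, .nil _, _ => by simp only [comp, label, one_mul]
  | _, _, _, .cons e q, p => by
    simp only [comp, label, label_comp q p, mul_assoc]

lemma split : ∀ (l : List X) {u w : V} (p : LQPath Q u w) (m₂ : FreeMonoid X),
    p.label = FreeMonoid.ofList l * m₂ →
    ∃ (v : V) (q : LQPath Q v w) (r : LQPath Q u v),
      q.label = FreeMonoid.ofList l ∧ r.label = m₂
  | [], _, w, p, m₂, h => ⟨w, .nil w, p, by simp [LQPath.label], by simpa using h⟩
  | x :: l, u, w, p, m₂, h => by
    cases p with
    | nil =>
        exfalso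
        have := congrArg FreeMonoid.toList h
        simp [LQPath.label, FreeMonoid.toList_mul, FreeMonoid.toList_one] at this
    | cons e p' =>
        have h' := congrArg FreeMonoid.toList h
        simp only [label, FreeMonoid.toList_mul, FreeMonoid.toList_of, FreeMonoid.toList_ofList,
          List.singleton_append, List.cons_append, List.nil_append, List.cons.injEq] at h'
        have hp' : p'.label = FreeMonoid.ofList l * m₂ := by
          apply FreeMonoid.toList.injective
          simp [FreeMonoid.toList_mul, h'.2]
        obtain ⟨v, q, r, hq, hr⟩ := split l p' m₂ hp'
        refine ⟨v, .cons e q, r, ?_, hr⟩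
        apply FreeMonoid.toList.injective
        simp [label, FreeMonoid.toList_mul, hq, h'.1]

end LQPath

namespace LabelledQuiver

variable {Q : LabelledQuiver V E X}

lemma mem_sigmaM_iff {m : FreeMonoid X} {u w : V} :
    (u, w) ∈ Q.sigmaM m ↔ ∃ p : LQPath Q u w, p.label = m := Iff.rfl

lemma mem_sigmaM_mul {m₁ m₂ : FreeMonoid X} {u w : V} :
    (u, w) ∈ Q.sigmaM (m₁ * m₂) ↔ ∃ v, (v, w) ∈ Q.sigmaM m₁ ∧ (u, v) ∈ Q.sigmaM m₂ := by
  constructor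
  · rintro ⟨p, hp⟩
    obtain ⟨v, q, r, hq, hr⟩ := LQPath.split (FreeMonoid.toList m₁) p m₂ (by simpa using hp)
    exact ⟨v, ⟨q, by simpa using hq⟩, ⟨r, hr⟩⟩
  · rintro ⟨v, ⟨q, hq⟩, ⟨r, hr⟩⟩
    exact ⟨q.comp r, by simp [LQPath.label_comp, hq, hr]⟩

/-- If `g` is uniformly compatible then conjugating any two monomials of its support
by the same words gives the same signature sets. -/
lemma sigmaM_conj {g : FreeAlg R X} (hg : Q.UniformlyCompatible g)
    {mg mg' : FreeMonoid X} (h1 : mg ∈ (MonoidAlgebra.coeff g).support)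
    (h2 : mg' ∈ (MonoidAlgebra.coeff g).support) (a b : FreeMonoid X) :
    Q.sigmaM (a * mg * b) = Q.sigmaM (a * mg' * b) := by
  have hσ : Q.sigmaM mg = Q.sigmaM mg' := hg.2 mg h1 mg' h2
  ext ⟨u, w⟩
  simp only [mul_assoc, mem_sigmaM_mul, hσ]

lemma sigmaP_subset_sigmaM {f : FreeAlg R X} {m : FreeMonoid X}
    (hm : m ∈ (MonoidAlgebra.coeff f).support) : Q.sigmaP f ⊆ Q.sigmaM m :=
  Set.biInter_subset_of_mem hm

lemma subset_sigmaP {f : FreeAlg R X} {S : Set (V × V)}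
    (h : ∀ m ∈ (MonoidAlgebra.coeff f).support, S ⊆ Q.sigmaM m) : S ⊆ Q.sigmaP f :=
  Set.subset_iInter₂ h

lemma uniformlyCompatible_of_support_subset_singleton {f : FreeAlg R X} {a : FreeMonoid X}
    (hsupp : (MonoidAlgebra.coeff f).support ⊆ {a}) (ha : (Q.sigmaM a).Nonempty) :
    Q.UniformlyCompatible f := by
  have key : ∀ m ∈ (MonoidAlgebra.coeff f).support, m = a := by
    intro m hm; simpa using hsupp hm
  constructor
  · exact ha.mono (Q.subset_sigmaP (fun m hm => by rw [key m hm]))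
  · intro m hm m' hm'; rw [key m hm, key m' hm']

end LabelledQuiver

/-- The support of `monom a * g * monom b` consists of words `a * mg * b`
with `mg` in the support of `g`. -/
lemma support_monom_mul_monom (a b : FreeMonoid X) (g : FreeAlg R X) {m : FreeMonoid X}
    (hm : m ∈ (MonoidAlgebra.coeff (monom R a * g * monom R b : FreeAlg R X)).support) :
    ∃ mg ∈ (MonoidAlgebra.coeff g).support, m = a * mg * b := by
  classical
  have h1 : m ∈ Finset.image (· * b)
      (MonoidAlgebra.coeff (monom R a * g : FreeAlg R X)).support := by
    have := MonoidAlgebra.support_coeff_mul_single_subset (monom R a * g) (1 : R) b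
    rw [show (MonoidAlgebra.single b 1 : FreeAlg R X) = monom R b from rfl] at this
    exact this hm
  obtain ⟨m1, hm1, rfl⟩ := Finset.mem_image.mp h1
  have h2 : m1 ∈ Finset.image (a * ·) (MonoidAlgebra.coeff g).support := by
    have := MonoidAlgebra.support_coeff_single_mul_subset g (1 : R) a
    rw [show (MonoidAlgebra.single a 1 : FreeAlg R X) = monom R a from rfl] at this
    exact this hm1
  obtain ⟨mg, hmg, rfl⟩ := Finset.mem_image.mp h2
  exact ⟨mg, hmg, rfl⟩

lemma mem_support_multiset_sum {s : Multiset (FreeAlg R X)} {m : FreeMonoid X}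
    (hm : m ∈ (MonoidAlgebra.coeff (s.sum : FreeAlg R X)).support) :
    ∃ x ∈ s, m ∈ (MonoidAlgebra.coeff (x : FreeAlg R X)).support := by
  classical
  induction s using Multiset.induction with
  | empty => simp at hm
  | cons a s ih =>
      rw [Multiset.sum_cons] at hm
      rcases Finset.mem_union.mp (Finsupp.support_add hm) with h | h
      · exact ⟨a, Multiset.mem_cons_self a s, h⟩
      · obtain ⟨x, hx, hmx⟩ := ih h
        exact ⟨x, Multiset.mem_cons_of_mem hx, hmx⟩

/-- Evaluation of a rewriting datum `(λ, a, g, b)` to `λ • (monom a * g * monom b)`. -/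
noncomputable def evalT (t : R × FreeMonoid X × FreeAlg R X × FreeMonoid X) : FreeAlg R X :=
  t.1 • (monom R t.2.1 * t.2.2.1 * monom R t.2.2.2)

lemma rewritesTo_zero_of_multiset (F : Set (FreeAlg R X))
    (s : Multiset (R × FreeMonoid X × FreeAlg R X × FreeMonoid X))
    (hs : ∀ t ∈ s, t.2.2.1 ∈ F) : RewritesTo F (s.map evalT).sum 0 := by
  classical
  induction s using Multiset.strongInductionOn with
  | _ s ih =>
    by_cases h0 : ((s.map evalT).sum : FreeAlg R X) = 0
    · rw [h0]
      exact Relation.ReflTransGen.refl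
    · obtain ⟨m, hm⟩ := Finsupp.support_nonempty_iff.mpr (fun h => h0 (MonoidAlgebra.coeff_eq_zero.mp h))
      obtain ⟨x, hx, hmx⟩ := mem_support_multiset_sum hm
      obtain ⟨t, ht, rfl⟩ := Multiset.mem_map.mp hx
      obtain ⟨lam, a, g, b⟩ := t
      have hmx' : m ∈ (MonoidAlgebra.coeff (monom R a * g * monom R b : FreeAlg R X)).support :=
        Finsupp.support_smul hmx
      obtain ⟨mg, hmg, rfl⟩ := support_monom_mul_monom a b g hmx'
      set f := ((s.map evalT).sum : FreeAlg R X) with hf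
      set t : R × FreeMonoid X × FreeAlg R X × FreeMonoid X := (lam, a, g, b) with htdef
      have hstep : RewriteStep g f (f + (-lam) • (monom R a * g * monom R b)) :=
        ⟨a, b, mg, -lam, hmg, hm, rfl⟩
      have hsum : f + (-lam) • (monom R a * g * monom R b)
          = (((s.erase t).map evalT).sum : FreeAlg R X) := by
        have hcons : s = t ::ₘ s.erase t := (Multiset.cons_erase ht).symm
        rw [hf, hcons, Multiset.map_cons, Multiset.sum_cons]
        show evalT t + _ + _ = _
        have : evalT t = lam • (monom R a * g * monom R b) := rfl
        rw [this, neg_smul, add_right_comm, add_neg_cancel, zero_add,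
          Multiset.erase_cons_head]
      have htail : RewritesTo F (((s.erase t).map evalT).sum) 0 :=
        ih (s.erase t) (Multiset.erase_lt.mpr ht)
          (fun t' ht' => hs t' (Multiset.mem_of_mem_erase ht'))
      rw [← hsum] at htail
      exact htail.head ⟨g, hs t ht, hstep⟩

lemma exists_multiset_rep (p q g : FreeAlg R X) :
    ∃ s : Multiset (R × FreeMonoid X × FreeAlg R X × FreeMonoid X),
      (∀ t ∈ s, t.2.2.1 = g) ∧ ((s.map evalT).sum : FreeAlg R X) = p * g * q := by
  classical
  refine ⟨((MonoidAlgebra.coeff p).support ×ˢ (MonoidAlgebra.coeff q).support).val.map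
      (fun mm => ((MonoidAlgebra.coeff p) mm.1 * (MonoidAlgebra.coeff q) mm.2, mm.1, g, mm.2)),
    ?_, ?_⟩
  · intro t ht
    obtain ⟨mm, _, rfl⟩ := Multiset.mem_map.mp ht
    rfl
  · rw [Multiset.map_map]
    show (∑ mm ∈ (MonoidAlgebra.coeff p).support ×ˢ (MonoidAlgebra.coeff q).support,
      ((MonoidAlgebra.coeff p) mm.1 * (MonoidAlgebra.coeff q) mm.2) •
        (monom R mm.1 * g * monom R mm.2)) = p * g * q
    have hp : p = ∑ m ∈ (MonoidAlgebra.coeff p).support,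
        ((MonoidAlgebra.coeff p) m) • (monom R m : FreeAlg R X) := by
      conv_lhs => rw [← MonoidAlgebra.sum_coeff_single p]
      rw [Finsupp.sum]
      refine Finset.sum_congr rfl fun m _ => ?_
      rw [show (monom R m : FreeAlg R X) = MonoidAlgebra.single m (1:R) from rfl,
        MonoidAlgebra.smul_single', mul_one]
    have hq : q = ∑ m ∈ (MonoidAlgebra.coeff q).support,
        ((MonoidAlgebra.coeff q) m) • (monom R m : FreeAlg R X) := by
      conv_lhs => rw [← MonoidAlgebra.sum_coeff_single q]
      rw [Finsupp.sum]
      refine Finset.sum_congr rfl fun m _ => ?_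
      rw [show (monom R m : FreeAlg R X) = MonoidAlgebra.single m (1:R) from rfl,
        MonoidAlgebra.smul_single', mul_one]
    rw [Finset.sum_product]
    conv_rhs => rw [hp, hq]
    simp only [Finset.sum_mul, Finset.mul_sum, Finset.smul_sum, smul_mul_assoc, mul_smul_comm,
      smul_smul, mul_assoc]
    rw [Finset.sum_comm]
    exact Finset.sum_congr rfl fun m _ => Finset.sum_congr rfl fun m' _ => by rw [mul_comm]


lemma exists_multiset_rep_sum (F : Set (FreeAlg R X)) :
    ∀ (n : ℕ) (a b g : Fin n → FreeAlg R X), (∀ i, g i ∈ F) →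
    ∃ s : Multiset (R × FreeMonoid X × FreeAlg R X × FreeMonoid X),
      (∀ t ∈ s, t.2.2.1 ∈ F) ∧ ((s.map evalT).sum : FreeAlg R X) = ∑ i, a i * g i * b i := by
  intro n
  induction n with
  | zero => exact fun a b g hg => ⟨0, by simp, by simp⟩
  | succ n ihn =>
      intro a b g hg
      obtain ⟨s, hsF, hsum⟩ := ihn (fun i => a i.castSucc) (fun i => b i.castSucc)
        (fun i => g i.castSucc) (fun i => hg _)
      obtain ⟨s', hs'g, hs'sum⟩ :=
        exists_multiset_rep (a (Fin.last n)) (b (Fin.last n)) (g (Fin.last n))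
      refine ⟨s + s', ?_, ?_⟩
      · intro t ht
        rcases Multiset.mem_add.mp ht with h | h
        · exact hsF t h
        · rw [hs'g t h]; exact hg _
      · rw [Multiset.map_add, Multiset.sum_add, hsum, hs'sum, Fin.sum_univ_castSucc]

lemma memIdeal_rewritesTo_zero (F : Set (FreeAlg R X)) {f : FreeAlg R X}
    (hf : MemIdeal F f) : RewritesTo F f 0 := by
  obtain ⟨n, a, b, g, hg, rfl⟩ := hf
  obtain ⟨s, hsF, hsum⟩ := exists_multiset_rep_sum F n a b g hg
  rw [← hsum]
  exact rewritesTo_zero_of_multiset F s hsF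

lemma rewrites_rep (Q : LabelledQuiver V E X) (F : Set (FreeAlg R X))
    (hF : ∀ g ∈ F, Q.UniformlyCompatible g) (S : Set (V × V)) (hS : S.Nonempty) :
    ∀ {p : FreeAlg R X}, RewritesTo F p 0 → S ⊆ Q.sigmaP p →
    ∃ (n : ℕ) (A B G : Fin n → FreeAlg R X),
      (∀ i, Q.UniformlyCompatible (A i)) ∧ (∀ i, Q.UniformlyCompatible (B i)) ∧
      (∀ i, G i ∈ F) ∧ p = ∑ i, A i * G i * B i ∧
      ∀ i, S ⊆ Q.sigmaP (A i * G i * B i) := by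
  classical
  intro p hp
  induction hp using Relation.ReflTransGen.head_induction_on with
  | refl =>
      intro _
      exact ⟨0, Fin.elim0, Fin.elim0, Fin.elim0, fun i => i.elim0, fun i => i.elim0,
        fun i => i.elim0, by simp, fun i => i.elim0⟩
  | head hstep htail ih =>
      intro hSp
      rename_i pstart c
      obtain ⟨g, hgF, aW, bW, mg, lam, hmg, hmem, hq⟩ := hstep
      have hgUC := hF g hgF
      have hSamb : S ⊆ Q.sigmaM (aW * mg * bW) :=
        hSp.trans (Q.sigmaP_subset_sigmaM hmem)
      have hσ : ∀ m ∈ (MonoidAlgebra.coeff (monom R aW * g * monom R bW : FreeAlg R X)).support, S ⊆ Q.sigmaM m := by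
        intro m hm
        obtain ⟨mg', hmg', rfl⟩ := support_monom_mul_monom aW bW g hm
        rw [LabelledQuiver.sigmaM_conj hgUC hmg' hmg aW bW]
        exact hSamb
      have hSq : S ⊆ Q.sigmaP c := by
        apply Q.subset_sigmaP
        intro m hm
        rw [hq] at hm
        rcases Finset.mem_union.mp (Finsupp.support_add hm) with h | h
        · exact hSp.trans (Q.sigmaP_subset_sigmaM h)
        · exact hσ m (Finsupp.support_smul h)
      obtain ⟨n, A, B, G, hA, hB, hG, hqsum, hσq⟩ := ih hSq
      obtain ⟨⟨u, w⟩, huw⟩ := hS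
      have hamb := hSamb huw
      have haNE : (Q.sigmaM aW).Nonempty := by
        rw [mul_assoc] at hamb
        obtain ⟨v, hv, -⟩ := LabelledQuiver.mem_sigmaM_mul.mp hamb
        exact ⟨(v, w), hv⟩
      have hbNE : (Q.sigmaM bW).Nonempty := by
        obtain ⟨v, -, hv⟩ := LabelledQuiver.mem_sigmaM_mul.mp hamb
        exact ⟨(u, v), hv⟩
      refine ⟨n + 1, Fin.cons ((-lam) • monom R aW) A, Fin.cons (monom R bW) B,
        Fin.cons g G, ?_, ?_, ?_, ?_, ?_⟩
      · refine Fin.cases ?_ (fun i => by simpa using hA i)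
        simp only [Fin.cons_zero]
        refine Q.uniformlyCompatible_of_support_subset_singleton ?_ haNE
        exact (Finsupp.support_smul).trans Finsupp.support_single_subset
      · refine Fin.cases ?_ (fun i => by simpa using hB i)
        simp only [Fin.cons_zero]
        exact Q.uniformlyCompatible_of_support_subset_singleton
          Finsupp.support_single_subset hbNE
      · refine Fin.cases ?_ (fun i => by simpa using hG i)
        simpa using hgF
      · rw [Fin.sum_univ_succ]
        simp only [Fin.cons_zero, Fin.cons_succ]
        rw [← hqsum, hq]
        rw [smul_mul_assoc, smul_mul_assoc, neg_smul]
        abel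
      · refine Fin.cases ?_ (fun i => by simpa using hσq i)
        simp only [Fin.cons_zero]
        apply Q.subset_sigmaP
        intro m hm
        rw [smul_mul_assoc, smul_mul_assoc] at hm
        exact hσ m (Finsupp.support_smul hm)

end Aux

/-- For `F` a set of polynomials uniformly compatible with `Q` and any
`f ∈ R⟨X⟩`, the following are equivalent: (1) `f` is compatible with `Q` and lies in the
two-sided ideal generated by `F`; (2) `f` is compatible with `Q` and can be rewritten to zero
using `F`; (3) `f` is a `Q`-consequence of `F`. -/
theorem qConsequence_tfae {R V E X : Type*} [CommRing R] (Q : LabelledQuiver V E X)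
    (F : Set (FreeAlg R X)) (hF : ∀ g ∈ F, Q.UniformlyCompatible g) (f : FreeAlg R X) :
    ((Q.Compatible f ∧ MemIdeal F f) ↔ (Q.Compatible f ∧ RewritesTo F f 0)) ∧
      ((Q.Compatible f ∧ RewritesTo F f 0) ↔ Q.QConsequence F f) := by
  have h12 : Q.Compatible f ∧ MemIdeal F f → Q.Compatible f ∧ RewritesTo F f 0 :=
    fun h => ⟨h.1, memIdeal_rewritesTo_zero F h.2⟩
  have h23 : Q.Compatible f ∧ RewritesTo F f 0 → Q.QConsequence F f := by
    rintro ⟨hc, hr⟩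
    obtain ⟨n, A, B, G, hA, hB, hG, hsum, hσ⟩ :=
      rewrites_rep Q F hF (Q.sigmaP f) hc hr (subset_refl _)
    exact ⟨hc, n, A, B, G, hA, hB, hG, hsum, hσ⟩
  have h31 : Q.QConsequence F f → Q.Compatible f ∧ MemIdeal F f := by
    rintro ⟨hc, n, A, B, G, hA, hB, hG, hsum, hσ⟩
    exact ⟨hc, n, A, B, G, hG, hsum⟩
  exact ⟨⟨h12, fun h => h31 (h23 h)⟩, ⟨h23, fun h => h12 (h31 h)⟩⟩
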